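/- Let T ∈ C^{n×⋯×n} (d indices, d ≥ 2) with λ an eigenvalue for the homogeneous eigenproblem: T(x) = λ x^{∘(d−1)} with x ≠ 0, T(x)_i = Σ t_{i,i2,…,id} x_{i2}⋯x_{id}, and normalize x so that ‖x^{∘(d−1)}‖_2 = 1. Then |λ| ≤ ‖T‖_∞ · n^{(d−2)/2}, where ‖T‖_∞ is the spectral norm of T. -/

import Mathlib

/-- The spectral norm of an equidimensional complex `d`-tensor `T`, where `T i m` has
first index `i` and remaining `d-1` indices `m`. -/
noncomputable def specNormC (n d : ℕ) (T : Fin n → (Fin (d - 1) → Fin n) → ℂ) : ℝ :=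
  sSup {r | ∃ (y : Fin n → ℂ) (z : Fin (d - 1) → Fin n → ℂ),
    (∑ i, ‖y i‖ ^ 2 = 1) ∧ (∀ k, ∑ i, ‖z k i‖ ^ 2 = 1) ∧
    r = ‖∑ i, ∑ m : Fin (d - 1) → Fin n,
          T i m * y i * ∏ k, z k (m k)‖}

set_option maxHeartbeats 1000000 in
/-- If `T(x) = λ x^{∘(d-1)}` with `x ≠ 0` normalized so that
`‖x^{∘(d-1)}‖₂ = 1`, then `|λ| ≤ ‖T‖_∞ · n^{(d-2)/2}`. -/
theorem eigenvalue_le_spectral_norm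
    (n d : ℕ) (hd : 2 ≤ d)
    (T : Fin n → (Fin (d - 1) → Fin n) → ℂ)
    (lam : ℂ) (x : Fin n → ℂ) (hx0 : x ≠ 0)
    (heig : ∀ i, ∑ m : Fin (d - 1) → Fin n, T i m * ∏ k, x (m k)
      = lam * x i ^ (d - 1))
    (hnorm : ∑ i, ‖x i ^ (d - 1)‖ ^ 2 = 1) :
    ‖lam‖ ≤ specNormC n d T * (n : ℝ) ^ (((d : ℝ) - 2) / 2) := by
  classical
  have hn : 0 < n := by
    rcases Nat.eq_zero_or_pos n with h | h
    · subst h; simp at hnorm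
    · exact h
  obtain ⟨i0, hi0⟩ := Function.ne_iff.mp hx0
  set s2 : ℝ := ∑ i, ‖x i‖ ^ 2 with hs2
  have hs2pos : 0 < s2 := by
    refine Finset.sum_pos' (fun i _ => sq_nonneg _) ⟨i0, Finset.mem_univ _, ?_⟩
    exact pow_pos (norm_pos_iff.mpr hi0) 2
  set s : ℝ := Real.sqrt s2 with hs
  have hspos : 0 < s := Real.sqrt_pos.mpr hs2pos
  have hs_sq : s ^ 2 = s2 := Real.sq_sqrt hs2pos.le
  -- the witnesses
  set y : Fin n → ℂ := fun i => (starRingEnd ℂ) (x i ^ (d - 1)) with hy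
  set z : Fin (d - 1) → Fin n → ℂ := fun _ i => x i / (s : ℂ) with hz
  have habs_s : ‖(s : ℂ)‖ = s := by
    rw [Complex.norm_of_nonneg hspos.le]
  have hy1 : ∑ i, ‖y i‖ ^ 2 = 1 := by
    simpa [hy, Complex.norm_conj] using hnorm
  have hz1 : ∀ k, ∑ i, ‖z k i‖ ^ 2 = 1 := by
    intro k
    simp only [hz, norm_div, habs_s, div_pow]
    rw [← Finset.sum_div, ← hs2, ← hs_sq]
    exact div_self (pow_ne_zero 2 (ne_of_gt hspos))
  -- the value of the pairing
  have hval : (∑ i, ∑ m : Fin (d - 1) → Fin n, T i m * y i * ∏ k, z k (m k))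
      = lam * ((s : ℂ)⁻¹) ^ (d - 1) := by
    have hprod : ∀ m : Fin (d - 1) → Fin n,
        (∏ k, z k (m k)) = (∏ k, x (m k)) * ((s : ℂ)⁻¹) ^ (d - 1) := by
      intro m
      simp [hz, div_eq_mul_inv, Finset.prod_mul_distrib]
    calc (∑ i, ∑ m : Fin (d - 1) → Fin n, T i m * y i * ∏ k, z k (m k))
        = ∑ i, y i * ((s : ℂ)⁻¹) ^ (d - 1) *
            ∑ m : Fin (d - 1) → Fin n, T i m * ∏ k, x (m k) := by
          refine Finset.sum_congr rfl fun i _ => ?_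
          rw [Finset.mul_sum]
          refine Finset.sum_congr rfl fun m _ => ?_
          rw [hprod m]; ring
      _ = ∑ i, y i * ((s : ℂ)⁻¹) ^ (d - 1) * (lam * x i ^ (d - 1)) := by
          refine Finset.sum_congr rfl fun i _ => ?_
          rw [heig i]
      _ = lam * ((s : ℂ)⁻¹) ^ (d - 1) *
            ∑ i, ((‖x i ^ (d - 1)‖ : ℂ)) ^ 2 := by
          rw [Finset.mul_sum]
          refine Finset.sum_congr rfl fun i _ => ?_
          have key : ∀ w : ℂ, ((‖w‖ : ℂ)) ^ 2 = (starRingEnd ℂ) w * w := by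
            intro w
            rw [← Complex.ofReal_pow, Complex.sq_norm, Complex.normSq_eq_conj_mul_self]
          simp only [hy]
          rw [key]
          ring
      _ = lam * ((s : ℂ)⁻¹) ^ (d - 1) := by
          have hcast : (∑ i, ((‖x i ^ (d - 1)‖ : ℂ)) ^ 2)
              = ((∑ i, ‖x i ^ (d - 1)‖ ^ 2 : ℝ) : ℂ) := by
            push_cast
            rfl
          rw [hcast, hnorm, Complex.ofReal_one, mul_one]
  -- abs of the pairing value
  have habsval : ‖∑ i, ∑ m : Fin (d - 1) → Fin n,
        T i m * y i * ∏ k, z k (m k)‖ = ‖lam‖ * (s⁻¹) ^ (d - 1) := by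
    rw [hval, norm_mul, norm_pow, norm_inv, habs_s]
  -- the sup set
  set Sset : Set ℝ := {r | ∃ (y : Fin n → ℂ) (z : Fin (d - 1) → Fin n → ℂ),
    (∑ i, ‖y i‖ ^ 2 = 1) ∧ (∀ k, ∑ i, ‖z k i‖ ^ 2 = 1) ∧
    r = ‖∑ i, ∑ m : Fin (d - 1) → Fin n,
          T i m * y i * ∏ k, z k (m k)‖} with hSset
  have hmem : ‖lam‖ * (s⁻¹) ^ (d - 1) ∈ Sset :=
    ⟨y, z, hy1, hz1, habsval.symm⟩
  have hbdd : BddAbove Sset := by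
    refine ⟨∑ i, ∑ m : Fin (d - 1) → Fin n, ‖T i m‖, ?_⟩
    rintro r ⟨y', z', hy', hz', rfl⟩
    have hyle : ∀ i, ‖y' i‖ ≤ 1 := by
      intro i
      have h1 : ‖y' i‖ ^ 2 ≤ ∑ j, ‖y' j‖ ^ 2 :=
        Finset.single_le_sum (f := fun j => ‖y' j‖ ^ 2)
          (fun j _ => sq_nonneg _) (Finset.mem_univ i)
      rw [hy'] at h1
      nlinarith [norm_nonneg (y' i)]
    have hzle : ∀ k i, ‖z' k i‖ ≤ 1 := by
      intro k i
      have h1 : ‖z' k i‖ ^ 2 ≤ ∑ j, ‖z' k j‖ ^ 2 :=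
        Finset.single_le_sum (f := fun j => ‖z' k j‖ ^ 2)
          (fun j _ => sq_nonneg _) (Finset.mem_univ i)
      rw [hz' k] at h1
      nlinarith [norm_nonneg (z' k i)]
    calc ‖∑ i, ∑ m : Fin (d - 1) → Fin n, T i m * y' i * ∏ k, z' k (m k)‖
        ≤ ∑ i, ‖∑ m : Fin (d - 1) → Fin n, T i m * y' i * ∏ k, z' k (m k)‖ :=
          norm_sum_le _ _
      _ ≤ ∑ i, ∑ m : Fin (d - 1) → Fin n, ‖T i m‖ := by
          refine Finset.sum_le_sum fun i _ => ?_
          calc ‖∑ m : Fin (d - 1) → Fin n, T i m * y' i * ∏ k, z' k (m k)‖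
              ≤ ∑ m : Fin (d - 1) → Fin n, ‖T i m * y' i * ∏ k, z' k (m k)‖ :=
                norm_sum_le _ _
            _ ≤ ∑ m : Fin (d - 1) → Fin n, ‖T i m‖ := by
                refine Finset.sum_le_sum fun m _ => ?_
                rw [norm_mul, norm_mul]
                calc ‖T i m‖ * ‖y' i‖ * ‖∏ k, z' k (m k)‖
                    ≤ ‖T i m‖ * 1 * 1 := by
                      refine mul_le_mul (mul_le_mul le_rfl (hyle i) (norm_nonneg _)
                        (norm_nonneg _)) ?_ (norm_nonneg _) (by positivity)
                      rw [norm_prod]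
                      calc (∏ k, ‖z' k (m k)‖) ≤ ∏ k : Fin (d - 1), 1 :=
                            Finset.prod_le_prod (fun k _ => norm_nonneg _)
                              (fun k _ => hzle k (m k))
                        _ = 1 := Finset.prod_const_one
                  _ = ‖T i m‖ := by ring
  have hrw : specNormC n d T = sSup Sset := by
    rw [hSset, specNormC]
  have hspec : ‖lam‖ * (s⁻¹) ^ (d - 1) ≤ specNormC n d T := by
    rw [hrw]; exact le_csSup hbdd hmem
  have hspec0 : 0 ≤ specNormC n d T :=
    le_trans (mul_nonneg (norm_nonneg _)
      (pow_nonneg (inv_nonneg.mpr hspos.le) _)) hspec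
  -- power mean inequality
  have hpm : s2 ^ (d - 1) ≤ (n : ℝ) ^ (d - 2) := by
    have h := pow_sum_div_card_le_sum_pow (s := (Finset.univ : Finset (Fin n)))
      (f := fun i => ‖x i‖ ^ 2) (fun i _ => sq_nonneg _) (d - 2)
    have hde : d - 2 + 1 = d - 1 := by omega
    rw [hde] at h
    have hsum : ∑ i, (‖x i‖ ^ 2) ^ (d - 1) = 1 := by
      have he : ∀ i, (‖x i‖ ^ 2) ^ (d - 1) = ‖x i ^ (d - 1)‖ ^ 2 := by
        intro i; rw [norm_pow]; ring
      simp_rw [he]; exact hnorm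
    rw [hsum, ← hs2] at h
    simp only [Finset.card_univ, Fintype.card_fin] at h
    rw [div_le_one (by positivity)] at h
    exact h
  have hcast2 : ((d - 2 : ℕ) : ℝ) = (d : ℝ) - 2 := by
    push_cast [Nat.cast_sub hd]; ring
  have hR2 : ((n : ℝ) ^ (((d : ℝ) - 2) / 2)) ^ 2 = (n : ℝ) ^ (d - 2) := by
    rw [← Real.rpow_natCast ((n : ℝ) ^ (((d : ℝ) - 2) / 2)) 2,
      ← Real.rpow_mul (Nat.cast_nonneg n)]
    rw [show ((d : ℝ) - 2) / 2 * (2 : ℕ) = ((d - 2 : ℕ) : ℝ) by rw [hcast2]; push_cast; ring]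
    exact Real.rpow_natCast _ _
  have hsD : s ^ (d - 1) ≤ (n : ℝ) ^ (((d : ℝ) - 2) / 2) := by
    have h1 : (s ^ (d - 1)) ^ 2 ≤ ((n : ℝ) ^ (((d : ℝ) - 2) / 2)) ^ 2 := by
      rw [hR2, ← pow_mul, mul_comm (d - 1) 2, pow_mul, hs_sq]
      exact hpm
    have h2 := Real.sqrt_le_sqrt h1
    rwa [Real.sqrt_sq (pow_nonneg hspos.le _), Real.sqrt_sq
      (Real.rpow_nonneg (Nat.cast_nonneg n) _)] at h2
  calc ‖lam‖
      = (‖lam‖ * (s⁻¹) ^ (d - 1)) * s ^ (d - 1) := by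
        rw [mul_assoc, ← mul_pow, inv_mul_cancel₀ (ne_of_gt hspos), one_pow, mul_one]
    _ ≤ specNormC n d T * (n : ℝ) ^ (((d : ℝ) - 2) / 2) :=
        mul_le_mul hspec hsD (pow_nonneg hspos.le _) hspec0
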